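/- arXiv:1610.04630 — 3 statements merged into one kernel-verified Lean document; each statement's English description precedes it below -/
import Mathlib

section
/- The fixed subalgebra H_n = {x ∈ K[N] : δ(x) = x} equals the ℚ-linear span of {e_{n,i} : 0 ≤ i ≤ p^n−1}; in particular H_n is a ℚ-subalgebra of K[N] of ℚ-dimension exactly p^n, with ℚ-basis {e_{n,i}}. -/
open scoped BigOperators


open Finset

section AuxLemmas

variable {K : Type*} [Field K]

lemma aux_sum_zmod_val {M : Type*} [AddCommMonoid M] (N : ℕ) [NeZero N] (g : ℕ → M) :
    ∑ z : ZMod N, g z.val = ∑ j ∈ Finset.range N, g j := by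
  refine Finset.sum_nbij' (fun z => z.val) (fun j => (j : ZMod N)) ?_ ?_ ?_ ?_ ?_
  · intro a _; exact Finset.mem_range.mpr (ZMod.val_lt a)
  · intro a _; exact Finset.mem_univ _
  · intro a _; exact ZMod.natCast_rightInverse a
  · intro a ha; exact ZMod.val_cast_of_lt (Finset.mem_range.mp ha)
  · intro a _; rfl

lemma aux_pow_mod {N : ℕ} {ζ : K} (h1 : ζ ^ N = 1) (a : ℕ) : ζ ^ a = ζ ^ (a % N) := by
  conv_lhs => rw [← Nat.div_add_mod a N]
  rw [pow_add, pow_mul, h1, one_pow, one_mul]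

lemma aux_pow_modEq {N : ℕ} {ζ : K} (h1 : ζ ^ N = 1) {a b : ℕ} (h : a ≡ b [MOD N]) :
    ζ ^ a = ζ ^ b := by
  rw [aux_pow_mod h1 a, aux_pow_mod h1 b]
  exact congrArg (fun t => ζ ^ t) h

lemma aux_char_sum {N : ℕ} {ζ : K} (hζ : IsPrimitiveRoot ζ N) (hN : 0 < N)
    {a b : ℕ} (ha : a < N) (hb : b < N) :
    ∑ j ∈ Finset.range N, (ζ ^ a * (ζ ^ b)⁻¹) ^ j = if a = b then (N : K) else 0 := by
  have hζ0 : ζ ≠ 0 := hζ.ne_zero hN.ne'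
  by_cases h : a = b
  · subst h
    simp [mul_inv_cancel₀ (pow_ne_zero a hζ0)]
  · rw [if_neg h]
    have hw1 : ζ ^ a * (ζ ^ b)⁻¹ ≠ 1 := by
      intro hw
      exact h (hζ.pow_inj ha hb ((mul_inv_eq_one₀ (pow_ne_zero b hζ0)).mp hw))
    rw [geom_sum_eq hw1]
    have hwN : (ζ ^ a * (ζ ^ b)⁻¹) ^ N = 1 := by
      rw [mul_pow, pow_right_comm, hζ.pow_eq_one, one_pow, inv_pow, pow_right_comm,
        hζ.pow_eq_one, one_pow, inv_one, mul_one]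
    rw [hwN, sub_self, zero_div]

end AuxLemmas

/-- The fixed subalgebra `H_n = {x ∈ K[N] : δ(x) = x}` equals the ℚ-linear span of
the `e_{n,i}`; in particular it has ℚ-dimension exactly `p^n`, with ℚ-basis `{e_{n,i}}`. -/
theorem stmt_2 (p n : ℕ) (hp : p.Prime) (hp2 : p ≠ 2) (hn : 1 ≤ n)
    (K : Type*) [Field K] [Algebra ℚ K]
    (ζ : K) (hζ : IsPrimitiveRoot ζ (p ^ n))
    (hK : Algebra.adjoin ℚ {ζ} = ⊤)
    (π : ℕ)
    (hπ : ∃ u : (ZMod (p ^ n))ˣ, (u : ZMod (p ^ n)) = (π : ZMod (p ^ n)) ∧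
      ∀ v : (ZMod (p ^ n))ˣ, ∃ k : ℕ, v = u ^ k)
    (τ : K ≃ₐ[ℚ] K) (hτ : τ ζ = ζ ^ π)
    (σ : Multiplicative (ZMod (p ^ n))) (hσ : σ = Multiplicative.ofAdd (1 : ZMod (p ^ n)))
    (δ : MonoidAlgebra K (Multiplicative (ZMod (p ^ n))) ≃ₐ[ℚ]
        MonoidAlgebra K (Multiplicative (ZMod (p ^ n))))
    (hδ : ∀ (g : Multiplicative (ZMod (p ^ n))) (c : K),
      δ (MonoidAlgebra.single g c) = MonoidAlgebra.single (g ^ π) (τ c))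
    (e : ℕ → MonoidAlgebra K (Multiplicative (ZMod (p ^ n))))
    (he : ∀ i, e i = ((p : K) ^ n)⁻¹ •
      ∑ j ∈ Finset.range (p ^ n), MonoidAlgebra.single (σ ^ j) ((ζ ^ (i * j))⁻¹)) :
    (∀ x, δ x = x ↔
      x ∈ Submodule.span ℚ (Set.range fun i : Fin (p ^ n) => e (i : ℕ))) ∧
    Module.finrank ℚ ↥(Submodule.span ℚ (Set.range fun i : Fin (p ^ n) => e (i : ℕ))) = p ^ n ∧
    ∃ b : Module.Basis (Fin (p ^ n)) ℚ
        ↥(Submodule.span ℚ (Set.range fun i : Fin (p ^ n) => e (i : ℕ))),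
      ∀ i : Fin (p ^ n),
        (b i : MonoidAlgebra K (Multiplicative (ZMod (p ^ n)))) = e (i : ℕ) := by
  classical
  have hNpos : 0 < p ^ n := pow_pos hp.pos n
  haveI : NeZero (p ^ n) := ⟨hNpos.ne'⟩
  haveI : CharZero K := charZero_of_injective_algebraMap (algebraMap ℚ K).injective
  have hζN : ζ ^ (p ^ n) = 1 := hζ.pow_eq_one
  have hpK : ((p : K) ^ n) ≠ 0 := pow_ne_zero n (Nat.cast_ne_zero.mpr hp.pos.ne')
  obtain ⟨u, hu, hugen⟩ := hπ
  -- powers of σ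
  have hσpow : ∀ j : ℕ, σ ^ j = Multiplicative.ofAdd ((j : ZMod (p ^ n))) := by
    intro j
    rw [hσ, ← ofAdd_nsmul]
    simp [nsmul_eq_mul]
  have hofAddpow : ∀ (z : ZMod (p ^ n)) (m : ℕ),
      (Multiplicative.ofAdd z) ^ m = Multiplicative.ofAdd ((m : ZMod (p ^ n)) * z) := by
    intro z m
    rw [← ofAdd_nsmul]
    simp [nsmul_eq_mul]
  have hvalmul : ∀ (m : ℕ) (z : ZMod (p ^ n)),
      ((m : ZMod (p ^ n)) * z).val ≡ m * z.val [MOD (p ^ n)] := by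
    intro m z
    have h1 : ((m : ZMod (p ^ n)) * z) = ((m * z.val : ℕ) : ZMod (p ^ n)) := by
      rw [Nat.cast_mul, ZMod.natCast_rightInverse z]
    rw [h1, ZMod.val_natCast]
    exact Nat.mod_modEq _ _
  set F : ℕ → ZMod (p ^ n) → MonoidAlgebra K (Multiplicative (ZMod (p ^ n))) :=
    fun i z => MonoidAlgebra.single (Multiplicative.ofAdd z) ((ζ ^ (i * z.val))⁻¹) with hF
  have heF : ∀ i : ℕ, e i = ((p : K) ^ n)⁻¹ • ∑ z : ZMod (p ^ n), F i z := by
    intro i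
    rw [he i]
    congr 1
    rw [← aux_sum_zmod_val (p ^ n) (fun j => MonoidAlgebra.single (σ ^ j) ((ζ ^ (i * j))⁻¹))]
    apply Finset.sum_congr rfl
    intro z _
    rw [hσpow z.val, ZMod.natCast_rightInverse z]
  have hδsmul : ∀ (c : K) (x : MonoidAlgebra K (Multiplicative (ZMod (p ^ n)))),
      δ (c • x) = τ c • δ x := by
    intro c x
    induction x using MonoidAlgebra.induction_linear with
    | zero => simp
    | add f g hf hg => rw [smul_add, map_add, hf, hg, map_add, smul_add]
    | single g a =>
        rw [show ((c • MonoidAlgebra.single g a : MonoidAlgebra K (Multiplicative (ZMod (p ^ n))))) =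
          MonoidAlgebra.single g (c * a) from MonoidAlgebra.smul_single' c g a, hδ, hδ, map_mul,
          MonoidAlgebra.smul_single']
  have hδe : ∀ i : ℕ, δ (e i) = e i := by
    intro i
    rw [heF i, hδsmul, map_inv₀, map_pow, map_natCast, map_sum]
    congr 1
    have hterm : ∀ z : ZMod (p ^ n), δ (F i z) = F i ((π : ZMod (p ^ n)) * z) := by
      intro z
      rw [hF]
      simp only []
      rw [hδ, hofAddpow, map_inv₀, map_pow, hτ, ← pow_mul]
      congr 1
      apply congrArg Inv.inv
      have hmod : π * (i * z.val) ≡ i * ((π : ZMod (p ^ n)) * z).val [MOD p ^ n] := by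
        calc π * (i * z.val) = i * (π * z.val) := by ring
        _ ≡ i * ((π : ZMod (p ^ n)) * z).val [MOD p ^ n] :=
            (Nat.ModEq.mul_left i (hvalmul π z)).symm
      exact aux_pow_modEq hζN hmod
    rw [Finset.sum_congr rfl (fun z _ => hterm z)]
    have hperm : ∀ z : ZMod (p ^ n), (π : ZMod (p ^ n)) * z = (Units.mulLeft u) z := by
      intro z
      simp [Units.mulLeft, hu]
    rw [Finset.sum_congr rfl (fun z _ => congrArg (F i) (hperm z))]
    exact Equiv.sum_comp (Units.mulLeft u) (F i)
  set ψ : ℕ → (MonoidAlgebra K (Multiplicative (ZMod (p ^ n))) →ₗ[K] K) := fun k =>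
    ∑ z : ZMod (p ^ n), ζ ^ (k * z.val) •
      (Finsupp.lapply (Multiplicative.ofAdd z)).comp (MonoidAlgebra.coeffLinearEquiv K).toLinearMap with hψdef
  have hψ : ∀ k (x : MonoidAlgebra K (Multiplicative (ZMod (p ^ n)))),
      ψ k x = ∑ z : ZMod (p ^ n), ζ ^ (k * z.val) * x.coeff (Multiplicative.ofAdd z) := by
    intro k x
    rw [hψdef]
    simp only [LinearMap.coe_sum, Finset.sum_apply, LinearMap.smul_apply, smul_eq_mul]
    rfl
  have hψsingle : ∀ k (w : ZMod (p ^ n)) (c : K),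
      ψ k (MonoidAlgebra.single (Multiplicative.ofAdd w) c) = ζ ^ (k * w.val) * c := by
    intro k w c
    rw [hψ]
    rw [Finset.sum_eq_single w]
    · rw [show (MonoidAlgebra.single (Multiplicative.ofAdd w) c).coeff (Multiplicative.ofAdd w) = c by
        simp [MonoidAlgebra.coeff_single, Finsupp.single_apply]]
    · intro z _ hzw
      rw [show (MonoidAlgebra.single (Multiplicative.ofAdd w) c).coeff (Multiplicative.ofAdd z) = 0 by
        rw [MonoidAlgebra.coeff_single, Finsupp.single_apply, if_neg (fun h => hzw ((Multiplicative.ofAdd.injective h).symm))],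
        mul_zero]
    · intro h; exact absurd (Finset.mem_univ w) h
  have hψe : ∀ k i : ℕ, k < p ^ n → i < p ^ n → ψ k (e i) = if k = i then 1 else 0 := by
    intro k i hk hi
    rw [heF i, map_smul, map_sum]
    have h1 : ∀ z : ZMod (p ^ n), ψ k (F i z) = (ζ ^ k * (ζ ^ i)⁻¹) ^ z.val := by
      intro z
      rw [hF]
      simp only []
      rw [hψsingle, pow_mul, pow_mul, ← inv_pow, ← mul_pow]
    rw [Finset.sum_congr rfl (fun z _ => h1 z),
      aux_sum_zmod_val (p ^ n) (fun m => (ζ ^ k * (ζ ^ i)⁻¹) ^ m),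
      aux_char_sum hζ hNpos hk hi, smul_eq_mul]
    split_ifs
    · rw [show ((p ^ n : ℕ) : K) = (p : K) ^ n by push_cast; ring, inv_mul_cancel₀ hpK]
    · rw [mul_zero]
  have hone : ∀ w : ZMod (p ^ n), ∑ i ∈ Finset.range (p ^ n), ζ ^ (i * w.val) • e i =
      MonoidAlgebra.single (Multiplicative.ofAdd w) 1 := by
    intro w
    have hval_inj : ∀ z : ZMod (p ^ n), w.val = z.val → z = w := by
      intro z h
      rw [← ZMod.natCast_rightInverse z, ← ZMod.natCast_rightInverse w, h]
    have h1 : ∀ i ∈ Finset.range (p ^ n), ζ ^ (i * w.val) • e i =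
        ((p : K) ^ n)⁻¹ • ∑ z : ZMod (p ^ n),
          MonoidAlgebra.single (Multiplicative.ofAdd z)
            (ζ ^ (i * w.val) * (ζ ^ (i * z.val))⁻¹) := by
      intro i _
      rw [heF i, smul_comm, Finset.smul_sum]
      congr 1
      apply Finset.sum_congr rfl
      intro z _
      exact MonoidAlgebra.smul_single' _ _ _
    rw [Finset.sum_congr rfl h1, ← Finset.smul_sum, Finset.sum_comm]
    have h2 : ∀ z : ZMod (p ^ n), ∑ i ∈ Finset.range (p ^ n),
        MonoidAlgebra.single (Multiplicative.ofAdd z) (ζ ^ (i * w.val) * (ζ ^ (i * z.val))⁻¹) =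
        MonoidAlgebra.single (Multiplicative.ofAdd z)
          (if w.val = z.val then ((p ^ n : ℕ) : K) else 0) := by
      intro z
      rw [← MonoidAlgebra.coeff_inj, MonoidAlgebra.coeff_sum]
      simp only [MonoidAlgebra.coeff_single]
      rw [← Finsupp.single_finset_sum]
      congr 1
      have h3 : ∀ i ∈ Finset.range (p ^ n), ζ ^ (i * w.val) * (ζ ^ (i * z.val))⁻¹ =
          (ζ ^ w.val * (ζ ^ z.val)⁻¹) ^ i := by
        intro i _
        rw [mul_comm i w.val, mul_comm i z.val, pow_mul, pow_mul, ← inv_pow, ← mul_pow]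
      rw [Finset.sum_congr rfl h3, aux_char_sum hζ hNpos (ZMod.val_lt w) (ZMod.val_lt z)]
    rw [Finset.sum_congr rfl (fun z _ => h2 z)]
    have h4 : ∀ z : ZMod (p ^ n), MonoidAlgebra.single (Multiplicative.ofAdd z)
        (if w.val = z.val then ((p ^ n : ℕ) : K) else 0) =
        if z = w then MonoidAlgebra.single (Multiplicative.ofAdd z) ((p ^ n : ℕ) : K) else 0 := by
      intro z
      by_cases hz : z = w
      · subst hz; rw [if_pos rfl, if_pos rfl]
      · rw [if_neg (fun h => hz (hval_inj z h)), if_neg hz, MonoidAlgebra.single_zero]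
    rw [Finset.sum_congr rfl (fun z _ => h4 z), Finset.sum_ite_eq' Finset.univ w
      (fun z => MonoidAlgebra.single (Multiplicative.ofAdd z) ((p ^ n : ℕ) : K)),
      if_pos (Finset.mem_univ w), MonoidAlgebra.smul_single']
    congr 1
    rw [show ((p ^ n : ℕ) : K) = (p : K) ^ n by push_cast; ring]
    exact inv_mul_cancel₀ hpK
  have hrepr : ∀ x : MonoidAlgebra K (Multiplicative (ZMod (p ^ n))),
      x = ∑ i ∈ Finset.range (p ^ n), ψ i x • e i := by
    intro x
    induction x using MonoidAlgebra.induction_linear with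
    | zero => simp
    | add f g hf hg =>
        calc f + g = (∑ i ∈ Finset.range (p ^ n), ψ i f • e i)
              + (∑ i ∈ Finset.range (p ^ n), ψ i g • e i) := by rw [← hf, ← hg]
        _ = ∑ i ∈ Finset.range (p ^ n), ψ i (f + g) • e i := by
            rw [← Finset.sum_add_distrib]
            apply Finset.sum_congr rfl
            intro i _
            rw [map_add, add_smul]
    | single g c =>
        have h1 : ∀ i ∈ Finset.range (p ^ n),
            ψ i (MonoidAlgebra.single (Multiplicative.ofAdd (Multiplicative.toAdd g)) c) • e i =
            c • (ζ ^ (i * (Multiplicative.toAdd g).val) • e i) := by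
          intro i _
          rw [hψsingle, mul_comm, mul_smul]
        rw [show (MonoidAlgebra.single g c : MonoidAlgebra K (Multiplicative (ZMod (p ^ n)))) =
          MonoidAlgebra.single (Multiplicative.ofAdd (Multiplicative.toAdd g)) c from rfl]
        rw [Finset.sum_congr rfl h1, ← Finset.smul_sum, hone (Multiplicative.toAdd g),
          MonoidAlgebra.smul_single', mul_one]
  have hψsum : ∀ (c : ℕ → K) (k : ℕ), k < p ^ n →
      ψ k (∑ i ∈ Finset.range (p ^ n), c i • e i) = c k := by
    intro c k hk
    rw [map_sum]
    have h1 : ∀ i ∈ Finset.range (p ^ n), ψ k (c i • e i) =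
        c i * (if k = i then 1 else 0) := by
      intro i hi
      rw [map_smul, hψe k i hk (Finset.mem_range.mp hi), smul_eq_mul]
    rw [Finset.sum_congr rfl h1]
    simp [Finset.sum_ite_eq, Finset.mem_range.mpr hk]
  have hfixed : ∀ c : K, τ c = c → ∃ q : ℚ, algebraMap ℚ K q = c := by
    intro c hc0
    revert c hc0
    haveI hcyc : IsCyclotomicExtension {p ^ n} ℚ K := by
      constructor
      · rintro m hm -
        rw [Set.mem_singleton_iff] at hm
        subst hm
        exact ⟨ζ, hζ⟩
      · intro x
        have h1 : Algebra.adjoin ℚ ({ζ} : Set K) ≤ Algebra.adjoin ℚ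
            {b : K | ∃ m : ℕ, m ∈ ({p ^ n} : Set ℕ) ∧ m ≠ 0 ∧ b ^ m = 1} := by
          apply Algebra.adjoin_mono
          rintro y hy
          rw [Set.mem_singleton_iff] at hy
          subst hy
          exact ⟨p ^ n, rfl, hNpos.ne', hζ.pow_eq_one⟩
        exact h1 (by rw [hK]; trivial)
    haveI : FiniteDimensional ℚ K :=
      IsCyclotomicExtension.finiteDimensional {p ^ n} ℚ K
    have hdeg : Module.finrank ℚ K = Nat.totient (p ^ n) :=
      IsCyclotomicExtension.finrank (n := p ^ n) K
        (Polynomial.cyclotomic.irreducible_rat hNpos)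
    have hτpow : ∀ k : ℕ, (τ ^ k) ζ = ζ ^ (π ^ k) := by
      intro k
      induction k with
      | zero => simp
      | succ k ih => rw [pow_succ, AlgEquiv.mul_apply, hτ, map_pow, ih, ← pow_mul, ← pow_succ]
    have hgen : ∀ (f : K ≃ₐ[ℚ] K), f ζ = ζ → f = 1 := by
      intro f hf
      ext x
      have hx : x ∈ Algebra.adjoin ℚ ({ζ} : Set K) := by rw [hK]; trivial
      show f x = x
      induction hx using Algebra.adjoin_induction with
      | mem y hy => rw [Set.mem_singleton_iff] at hy; subst hy; exact hf
      | algebraMap q => exact f.commutes q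
      | add a b _ _ ha hb => rw [map_add, ha, hb]
      | mul a b _ _ ha hb => rw [map_mul, ha, hb]
    have hords : orderOf τ = orderOf u := by
      rw [orderOf_eq_orderOf_iff]
      intro k
      constructor
      · intro hk
        have h1 : ζ ^ (π ^ k) = ζ ^ 1 := by
          rw [pow_one, ← hτpow k, hk, AlgEquiv.one_apply]
        have h3 : (π ^ k) ≡ 1 [MOD p ^ n] := by
          have h5 : π ^ k % p ^ n = 1 % p ^ n := hζ.pow_inj (Nat.mod_lt _ hNpos)
            (Nat.mod_lt _ hNpos)
            (by rw [← aux_pow_mod hζN, ← aux_pow_mod hζN]; exact h1)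
          exact h5
        have h2 : (π : ZMod (p ^ n)) ^ k = 1 := by
          have h4 := (ZMod.natCast_eq_natCast_iff _ _ _).mpr h3
          push_cast at h4
          exact h4
        exact Units.ext (by rw [Units.val_pow_eq_pow_val, hu, h2, Units.val_one])
      · intro hk
        have h2 : (π : ZMod (p ^ n)) ^ k = 1 := by
          rw [← hu, ← Units.val_pow_eq_pow_val, hk, Units.val_one]
        have h3 : (π ^ k : ℕ) ≡ 1 [MOD p ^ n] := by
          have h4 : ((π ^ k : ℕ) : ZMod (p ^ n)) = ((1 : ℕ) : ZMod (p ^ n)) := by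
            push_cast
            exact h2
          exact (ZMod.natCast_eq_natCast_iff _ _ _).mp h4
        apply hgen
        calc (τ ^ k) ζ = ζ ^ (π ^ k) := hτpow k
        _ = ζ ^ 1 := aux_pow_modEq hζN h3
        _ = ζ := pow_one ζ
    have hcardu : orderOf u = Nat.totient (p ^ n) := by
      have hmem : ∀ v : (ZMod (p ^ n))ˣ, v ∈ Subgroup.zpowers u := by
        intro v
        obtain ⟨k, hk⟩ := hugen v
        exact ⟨k, by rw [hk]; simp⟩
      rw [orderOf_eq_card_of_forall_mem_zpowers hmem, Nat.card_eq_fintype_card, ZMod.card_units_eq_totient]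
    have hcardH : Fintype.card (Subgroup.zpowers τ) = Nat.totient (p ^ n) := by
      rw [Fintype.card_zpowers, hords, hcardu]
    have hfr : Module.finrank (IntermediateField.fixedField (Subgroup.zpowers τ)) K
        = Nat.totient (p ^ n) := by
      rw [IntermediateField.finrank_fixedField_eq_card, ← hcardH, Fintype.card_eq_nat_card]
    have hbot : IntermediateField.fixedField (Subgroup.zpowers τ) = ⊥ := by
      rw [← IntermediateField.finrank_eq_one_iff]
      have hmul := Module.finrank_mul_finrank ℚ
        (IntermediateField.fixedField (Subgroup.zpowers τ)) K
      rw [hfr, hdeg] at hmul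
      have ht : 0 < Nat.totient (p ^ n) := Nat.totient_pos.mpr hNpos
      exact Nat.eq_of_mul_eq_mul_right ht (by rw [hmul, one_mul])
    intro c hc
    have hstab : Subgroup.zpowers τ ≤ MulAction.stabilizer (K ≃ₐ[ℚ] K) c := by
      rw [Subgroup.zpowers_le]
      exact hc
    have hcH : c ∈ IntermediateField.fixedField (Subgroup.zpowers τ) := fun g => hstab g.2
    rw [hbot] at hcH
    exact IntermediateField.mem_bot.mp hcH
  have hspan_fix : ∀ x ∈ Submodule.span ℚ (Set.range fun i : Fin (p ^ n) => e (i : ℕ)),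
      δ x = x := by
    intro x hx
    induction hx using Submodule.span_induction with
    | mem y hy => obtain ⟨i, rfl⟩ := hy; exact hδe i
    | zero => exact map_zero δ
    | add a b _ _ ha hb => rw [map_add, ha, hb]
    | smul q a _ ha => rw [map_smul, ha]
  have hfix_span : ∀ x, δ x = x →
      x ∈ Submodule.span ℚ (Set.range fun i : Fin (p ^ n) => e (i : ℕ)) := by
    intro x hx
    have hx1 : x = ∑ i ∈ Finset.range (p ^ n), ψ i x • e i := hrepr x
    have hδx : δ x = ∑ i ∈ Finset.range (p ^ n), τ (ψ i x) • e i := by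
      conv_lhs => rw [hx1]
      rw [map_sum]
      apply Finset.sum_congr rfl
      intro i _
      rw [hδsmul, hδe i]
    have hτfix : ∀ k : ℕ, k < p ^ n → τ (ψ k x) = ψ k x := by
      intro k hk
      have h1 : ψ k (δ x) = τ (ψ k x) := by
        rw [hδx]; exact hψsum (fun i => τ (ψ i x)) k hk
      rw [hx] at h1
      exact h1.symm
    have hq : ∀ k : Fin (p ^ n), ∃ q : ℚ, algebraMap ℚ K q = ψ (k : ℕ) x :=
      fun k => hfixed _ (hτfix k k.isLt)
    choose q hqq using hq
    rw [hx1, ← Fin.sum_univ_eq_sum_range (fun i => ψ i x • e i) (p ^ n)]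
    apply Submodule.sum_mem
    intro k _
    rw [show ψ (k : ℕ) x • e (k : ℕ) = q k • e (k : ℕ) by rw [← hqq k, algebraMap_smul]]
    exact Submodule.smul_mem _ _ (Submodule.subset_span ⟨k, rfl⟩)
  have hli : LinearIndependent ℚ (fun i : Fin (p ^ n) => e (i : ℕ)) := by
    rw [Fintype.linearIndependent_iff]
    intro g hg k
    have h1 := congrArg (ψ (k : ℕ)) hg
    rw [map_sum, map_zero] at h1
    have h2 : ∀ i : Fin (p ^ n), ψ (k : ℕ) (g i • e (i : ℕ)) =
        algebraMap ℚ K (g i) * (if (k : ℕ) = (i : ℕ) then 1 else 0) := by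
      intro i
      rw [← algebraMap_smul K (g i) (e (i : ℕ)), map_smul, hψe _ _ k.isLt i.isLt, smul_eq_mul]
    rw [Finset.sum_congr rfl (fun i _ => h2 i)] at h1
    have h4 : ∑ i : Fin (p ^ n), algebraMap ℚ K (g i) *
        (if (k : ℕ) = (i : ℕ) then 1 else 0) = algebraMap ℚ K (g k) := by
      rw [Finset.sum_eq_single k]
      · simp
      · intro i _ hik
        rw [if_neg (fun h => hik (Fin.val_injective h).symm), mul_zero]
      · intro hk; exact absurd (Finset.mem_univ k) hk
    rw [h4] at h1
    exact (algebraMap ℚ K).injective (h1.trans (map_zero _).symm)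
  refine ⟨fun x => ⟨fun h => hfix_span x h, fun h => hspan_fix x h⟩, ?_, ?_⟩
  · rw [finrank_span_eq_card hli, Fintype.card_fin]
  · exact ⟨Module.Basis.span hli, fun i => congrArg Subtype.val (Module.Basis.span_apply hli i)⟩
end

section
/- An element (γ_n)_{n≥1} ∈ A is fixed by the action of every τ ∈ Gal(K_∞/ℚ) if and only if γ_n ∈ H_n for all n; that is, the fixed subalgebra A^{Gal(K_∞/ℚ)} equals H_∞. -/
open scoped BigOperators

lemma aux_fixed_rat (p : ℕ) (hp : p.Prime)
    (K : Type*) [Field K] [Algebra ℚ K]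
    (ζ : ℕ → K) (hζ : ∀ n : ℕ, IsPrimitiveRoot (ζ n) (p ^ (n + 1)))
    (hcompat : ∀ n : ℕ, ζ (n + 1) ^ p = ζ n)
    (hK : Algebra.adjoin ℚ (Set.range ζ) = ⊤)
    (a : K) (ha : ∀ τ : K ≃ₐ[ℚ] K, τ a = a) : ∃ q : ℚ, algebraMap ℚ K q = a := by
  haveI : CharZero K := charZero_of_injective_algebraMap (algebraMap ℚ K).injective
  have hinst : ‹Algebra ℚ K› = DivisionRing.toRatAlgebra := Subsingleton.elim _ _
  subst hinst
  have hppos : ∀ n : ℕ, 0 < p ^ (n + 1) := fun n => pow_pos hp.pos _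
  have hpow : ∀ m k : ℕ, ζ m = ζ (m + k) ^ p ^ k := by
    intro m k
    induction k with
    | zero => simp
    | succ k ih =>
      rw [ih, ← hcompat (m + k), ← pow_mul, ← pow_succ', ← Nat.add_assoc]
  have hmono : Monotone (fun n => Algebra.adjoin ℚ ({ζ n} : Set K)) := by
    intro m n hmn
    have h1 : ζ m ∈ Algebra.adjoin ℚ ({ζ n} : Set K) := by
      have h2 := hpow m (n - m)
      rw [Nat.add_sub_cancel' hmn] at h2
      have h3 : ζ n ∈ Algebra.adjoin ℚ ({ζ n} : Set K) := Algebra.subset_adjoin rfl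
      rw [h2]; exact pow_mem h3 _
    rw [Algebra.adjoin_le_iff]
    simpa using h1
  have hcover : ∀ x : K, ∃ n, x ∈ Algebra.adjoin ℚ ({ζ n} : Set K) := by
    intro x
    have hx : x ∈ ⨆ n, Algebra.adjoin ℚ ({ζ n} : Set K) := by
      have hle : Algebra.adjoin ℚ (Set.range ζ) ≤ ⨆ n, Algebra.adjoin ℚ ({ζ n} : Set K) := by
        rw [Algebra.adjoin_le_iff]
        rintro _ ⟨n, rfl⟩
        have h3 : ζ n ∈ Algebra.adjoin ℚ ({ζ n} : Set K) := Algebra.subset_adjoin rfl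
        exact le_iSup (fun n => Algebra.adjoin ℚ ({ζ n} : Set K)) n h3
      exact hle (hK ▸ trivial)
    have hcoe := Subalgebra.coe_iSup_of_directed hmono.directed_le
    have hx' : x ∈ (↑(⨆ n, Algebra.adjoin ℚ ({ζ n} : Set K)) : Set K) := hx
    rw [hcoe] at hx'
    simpa using hx'
  have hQint : ∀ n : ℕ, IsIntegral ℚ (ζ n) := fun n => ((hζ n).isIntegral (hppos n)).tower_top
  -- the intermediate fields
  have hmem : ∀ (x : K), ∃ n, x ∈ IntermediateField.adjoin ℚ ({ζ n} : Set K) := by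
    intro x
    obtain ⟨n, hn⟩ := hcover x
    exact ⟨n, IntermediateField.algebra_adjoin_le_adjoin ℚ _ hn⟩
  -- cyclotomic extension structure on each level
  have hcyc : ∀ n : ℕ, IsCyclotomicExtension {p ^ (n + 1)} ℚ
      (IntermediateField.adjoin ℚ ({ζ n} : Set K)) := by
    intro n
    set L := IntermediateField.adjoin ℚ ({ζ n} : Set K) with hL
    have hζL : ζ n ∈ L := IntermediateField.subset_adjoin ℚ _ rfl
    set z : L := ⟨ζ n, hζL⟩ with hz
    have hzprim : IsPrimitiveRoot z (p ^ (n + 1)) := by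
      rw [← IsPrimitiveRoot.coe_submonoidClass_iff]
      exact hζ n
    have h2 : (L : Set K) = (Algebra.adjoin ℚ ({ζ n} : Set K) : Set K) := by
      rw [← IntermediateField.adjoin_simple_toSubalgebra_of_isAlgebraic (hQint n).isAlgebraic]
      rfl
    have hgen : ∀ x : L, x ∈ Algebra.adjoin ℚ ({z} : Set L) := by
      rintro ⟨x, hx⟩
      have hx' : x ∈ Algebra.adjoin ℚ ({ζ n} : Set K) := by
        rw [← SetLike.mem_coe, ← h2]; exact hx
      have key : ∀ (y : K) (hy : y ∈ Algebra.adjoin ℚ ({ζ n} : Set K)),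
          ∀ (hyL : y ∈ L), (⟨y, hyL⟩ : L) ∈ Algebra.adjoin ℚ ({z} : Set L) := by
        intro y hy
        induction hy using Algebra.adjoin_induction with
        | mem w hw =>
          intro hyL
          have hwz : (⟨w, hyL⟩ : L) = z := Subtype.ext hw
          rw [hwz]
          exact Algebra.subset_adjoin rfl
        | algebraMap r =>
          intro hyL
          have h5 : ((algebraMap ℚ L r : L) : K) = algebraMap ℚ K r := by
            rw [eq_ratCast (algebraMap ℚ K) r, eq_ratCast (algebraMap ℚ (↥L)) r]
            push_cast
            rfl
          have : (⟨algebraMap ℚ K r, hyL⟩ : L) = algebraMap ℚ L r := Subtype.ext h5.symm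
          rw [this]
          exact Subalgebra.algebraMap_mem _ r
        | add u v hu hv ihu ihv =>
          intro hyL
          have huL : u ∈ L := by rw [← SetLike.mem_coe, h2]; exact hu
          have hvL : v ∈ L := by rw [← SetLike.mem_coe, h2]; exact hv
          have : (⟨u + v, hyL⟩ : L) = ⟨u, huL⟩ + ⟨v, hvL⟩ := Subtype.ext rfl
          rw [this]
          exact add_mem (ihu huL) (ihv hvL)
        | mul u v hu hv ihu ihv =>
          intro hyL
          have huL : u ∈ L := by rw [← SetLike.mem_coe, h2]; exact hu
          have hvL : v ∈ L := by rw [← SetLike.mem_coe, h2]; exact hv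
          have : (⟨u * v, hyL⟩ : L) = ⟨u, huL⟩ * ⟨v, hvL⟩ := Subtype.ext rfl
          rw [this]
          exact mul_mem (ihu huL) (ihv hvL)
      exact key x hx' hx
    refine ⟨?_, ?_⟩
    · rintro m hm -
      rw [Set.mem_singleton_iff] at hm
      subst hm
      exact ⟨z, hzprim⟩
    · intro x
      refine Algebra.adjoin_mono ?_ (hgen x)
      rintro _ rfl
      exact ⟨p ^ (n + 1), rfl, (hppos n).ne', hzprim.pow_eq_one⟩
  haveI hfd : ∀ n : ℕ, FiniteDimensional ℚ (IntermediateField.adjoin ℚ ({ζ n} : Set K)) := by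
    intro n
    exact IntermediateField.adjoin.finiteDimensional (hQint n)
  have hgal : ∀ n : ℕ, IsGalois ℚ (IntermediateField.adjoin ℚ ({ζ n} : Set K)) := by
    intro n
    haveI := hcyc n
    exact IsCyclotomicExtension.isGalois {p ^ (n + 1)} ℚ _
  -- K is normal over ℚ
  haveI hnorm : Normal ℚ K := by
    rw [normal_iff]
    intro x
    obtain ⟨n, hn⟩ := hmem x
    haveI : FiniteDimensional ℚ (IntermediateField.adjoin ℚ ({ζ n} : Set K)) := hfd n
    haveI : IsGalois ℚ (IntermediateField.adjoin ℚ ({ζ n} : Set K)) := hgal n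
    set y : IntermediateField.adjoin ℚ ({ζ n} : Set K) := ⟨x, hn⟩ with hy
    have hxy : algebraMap (IntermediateField.adjoin ℚ ({ζ n} : Set K)) K y = x := rfl
    have hyint : IsIntegral ℚ y := IsIntegral.of_finite ℚ y
    have hmp : minpoly ℚ x = minpoly ℚ y := by
      rw [← hxy]
      exact minpoly.algebraMap_eq (algebraMap (IntermediateField.adjoin ℚ ({ζ n} : Set K)) K).injective y
    constructor
    · rw [← hxy]; exact hyint.algebraMap
    · rw [hmp]
      have hsp : Polynomial.Splits ((minpoly ℚ y).map
          (algebraMap ℚ (IntermediateField.adjoin ℚ ({ζ n} : Set K)))) := Normal.splits inferInstance y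
      have h6 : algebraMap ℚ K
          = (algebraMap (IntermediateField.adjoin ℚ ({ζ n} : Set K)) K).comp
            (algebraMap ℚ (IntermediateField.adjoin ℚ ({ζ n} : Set K))) :=
        IsScalarTower.algebraMap_eq ℚ _ K
      rw [h6]
      rw [← Polynomial.map_map]; exact hsp.map _
  -- now the main argument
  obtain ⟨n, hn⟩ := hmem a
  haveI : FiniteDimensional ℚ (IntermediateField.adjoin ℚ ({ζ n} : Set K)) := hfd n
  haveI : IsGalois ℚ (IntermediateField.adjoin ℚ ({ζ n} : Set K)) := hgal n
  set b : IntermediateField.adjoin ℚ ({ζ n} : Set K) := ⟨a, hn⟩ with hb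
  have hab : algebraMap (IntermediateField.adjoin ℚ ({ζ n} : Set K)) K b = a := rfl
  have hfix : ∀ σ : (IntermediateField.adjoin ℚ ({ζ n} : Set K)) ≃ₐ[ℚ]
      (IntermediateField.adjoin ℚ ({ζ n} : Set K)), σ b = b := by
    intro σ
    have hτ := ha (σ.liftNormal K)
    rw [← hab, AlgEquiv.liftNormal_commutes] at hτ
    exact Subtype.ext (by simpa using hτ)
  have hbbot : b ∈ (⊥ : IntermediateField ℚ (IntermediateField.adjoin ℚ ({ζ n} : Set K))) := by
    have htop : IntermediateField.fixedField
        (⊤ : Subgroup ((IntermediateField.adjoin ℚ ({ζ n} : Set K)) ≃ₐ[ℚ]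
          (IntermediateField.adjoin ℚ ({ζ n} : Set K)))) = ⊥ :=
      (IsGalois.tfae.out 0 1).mp (hgal n)
    rw [← htop]
    rintro ⟨σ, -⟩
    exact hfix σ
  rw [IntermediateField.mem_bot] at hbbot
  obtain ⟨q, hq⟩ := hbbot
  refine ⟨q, ?_⟩
  rw [← hab, ← hq, ← IsScalarTower.algebraMap_apply]

private lemma aux_pow_mod_s13 {M : Type*} [Monoid M] (g : M) (m : ℕ) (hg : g ^ m = 1) (a : ℕ) :
    g ^ a = g ^ (a % m) := by
  conv_lhs => rw [← Nat.div_add_mod a m]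
  rw [pow_add, pow_mul, hg, one_pow, one_mul]

set_option maxHeartbeats 1000000 in
/-- An element `(γ_n)_{n≥1} ∈ A` is fixed by the (diagonal) action of every
`τ ∈ Gal(K_∞/ℚ)` if and only if `γ_n ∈ H_n` for all `n`; that is, the fixed subalgebra
`A^{Gal(K_∞/ℚ)}` equals `H_∞`.  Here `τ` acts on `K_∞[N_n]` by applying `τ` to coefficients
and sending `σ_n^j ↦ σ_n^{c_n(τ)·j}`, where `τ(ζ_n) = ζ_n^{c_n(τ)}`. -/
theorem stmt_13 (p : ℕ) (hp : p.Prime) (hp2 : p ≠ 2)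
    (K : Type*) [Field K] [Algebra ℚ K]
    (ζ : ℕ → K) (hζ : ∀ n : ℕ, IsPrimitiveRoot (ζ n) (p ^ (n + 1)))
    (hcompat : ∀ n : ℕ, ζ (n + 1) ^ p = ζ n)
    (hK : Algebra.adjoin ℚ (Set.range ζ) = ⊤)
    (e : ∀ n : ℕ, ℕ → MonoidAlgebra K (Multiplicative (ZMod (p ^ (n + 1)))))
    (he : ∀ n i, e n i = ((p : K) ^ (n + 1))⁻¹ •
      ∑ j ∈ Finset.range (p ^ (n + 1)),
        MonoidAlgebra.single ((Multiplicative.ofAdd (1 : ZMod (p ^ (n + 1)))) ^ j)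
          ((ζ n ^ (i * j))⁻¹))
    (ν : ∀ n : ℕ, MonoidAlgebra K (Multiplicative (ZMod (p ^ (n + 2)))) →ₐ[K]
        MonoidAlgebra K (Multiplicative (ZMod (p ^ (n + 1)))))
    (hν : ∀ (n j : ℕ) (c : K),
      ν n (MonoidAlgebra.single ((Multiplicative.ofAdd (1 : ZMod (p ^ (n + 2)))) ^ j) c) =
        MonoidAlgebra.single ((Multiplicative.ofAdd (1 : ZMod (p ^ (n + 1)))) ^ j) c)
    (T : (K ≃ₐ[ℚ] K) → ∀ n : ℕ,
      MonoidAlgebra K (Multiplicative (ZMod (p ^ (n + 1)))) ≃ₐ[ℚ]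
        MonoidAlgebra K (Multiplicative (ZMod (p ^ (n + 1)))))
    (hT : ∀ (τ : K ≃ₐ[ℚ] K) (n c : ℕ), τ (ζ n) = ζ n ^ c →
      ∀ (g : Multiplicative (ZMod (p ^ (n + 1)))) (x : K),
        T τ n (MonoidAlgebra.single g x) = MonoidAlgebra.single (g ^ c) (τ x)) :
    ∀ γ : ∀ n : ℕ, MonoidAlgebra K (Multiplicative (ZMod (p ^ (n + 1)))),
      (∀ n, ν n (γ (n + 1)) = γ n) →
      ((∀ (τ : K ≃ₐ[ℚ] K) (n : ℕ), T τ n (γ n) = γ n) ↔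
        ∀ n, γ n ∈ Submodule.span ℚ (Set.range fun i : Fin (p ^ (n + 1)) => e n (i : ℕ))) := by
  intro γ _hcomp
  haveI : CharZero K := charZero_of_injective_algebraMap (algebraMap ℚ K).injective
  have hm0 : ∀ n : ℕ, 0 < p ^ (n + 1) := fun n => pow_pos hp.pos _
  have hm1 : ∀ n : ℕ, 1 < p ^ (n + 1) := fun n => Nat.one_lt_pow (Nat.succ_ne_zero n) hp.one_lt
  have hzne : ∀ n : ℕ, ζ n ≠ 0 := fun n => (hζ n).ne_zero (hm0 n).ne'
  have hpKne : ∀ n : ℕ, ((p : K) ^ (n + 1)) ≠ 0 :=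
    fun n => pow_ne_zero _ (Nat.cast_ne_zero.mpr hp.pos.ne')
  have hzp : ∀ n (a : ℕ), ζ n ^ a = ζ n ^ (a % p ^ (n + 1)) :=
    fun n a => aux_pow_mod_s13 _ _ (hζ n).pow_eq_one a
  have hmulmod : ∀ n (a b : ℕ), ζ n ^ (a * b) = ζ n ^ (a * (b % p ^ (n + 1))) := by
    intro n a b
    rw [hzp n (a * b), hzp n (a * (b % p ^ (n + 1))), Nat.mul_mod a b, Nat.mul_mod a (b % _),
      Nat.mod_mod_of_dvd b dvd_rfl]
  have hgone : ∀ n : ℕ, (Multiplicative.ofAdd (1 : ZMod (p ^ (n + 1)))) ^ (p ^ (n + 1)) = 1 := by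
    intro n
    rw [← ofAdd_nsmul, nsmul_eq_mul, mul_one, ZMod.natCast_self, ofAdd_zero]
  have hgp : ∀ n (a : ℕ), (Multiplicative.ofAdd (1 : ZMod (p ^ (n + 1)))) ^ a
      = (Multiplicative.ofAdd (1 : ZMod (p ^ (n + 1)))) ^ (a % p ^ (n + 1)) :=
    fun n a => aux_pow_mod_s13 _ _ (hgone n) a
  have hval : ∀ n (j : ℕ),
      (Multiplicative.toAdd ((Multiplicative.ofAdd (1 : ZMod (p ^ (n + 1)))) ^ j)).val
        = j % p ^ (n + 1) := by
    intro n j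
    haveI : NeZero (p ^ (n + 1)) := ⟨(hm0 n).ne'⟩
    rw [toAdd_pow, toAdd_ofAdd, nsmul_eq_mul, mul_one, ZMod.val_natCast]
  have hgsurj : ∀ n (g : Multiplicative (ZMod (p ^ (n + 1)))),
      g = (Multiplicative.ofAdd (1 : ZMod (p ^ (n + 1)))) ^ (Multiplicative.toAdd g).val := by
    intro n g
    haveI : NeZero (p ^ (n + 1)) := ⟨(hm0 n).ne'⟩
    conv_lhs => rw [← ofAdd_toAdd g, ← ZMod.natCast_rightInverse (Multiplicative.toAdd g)]
    rw [show (((Multiplicative.toAdd g).val : ℕ) : ZMod (p ^ (n + 1)))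
        = (Multiplicative.toAdd g).val • (1 : ZMod (p ^ (n + 1))) by rw [nsmul_eq_mul, mul_one],
      ofAdd_nsmul]
  have hgeom : ∀ n (a b : ℕ), a < p ^ (n + 1) → b < p ^ (n + 1) →
      (∑ t ∈ Finset.range (p ^ (n + 1)), ζ n ^ (a * t) * (ζ n ^ (b * t))⁻¹)
        = if a = b then (p : K) ^ (n + 1) else 0 := by
    intro n a b ha hb
    by_cases hab : a = b
    · subst hab
      rw [if_pos rfl]
      have h1 : ∀ t ∈ Finset.range (p ^ (n + 1)), ζ n ^ (a * t) * (ζ n ^ (a * t))⁻¹ = 1 :=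
        fun t _ => mul_inv_cancel₀ (pow_ne_zero _ (hzne n))
      rw [Finset.sum_congr rfl h1, Finset.sum_const, Finset.card_range, nsmul_eq_mul, mul_one]
      push_cast
      ring
    · rw [if_neg hab]
      set x := ζ n ^ a * (ζ n ^ b)⁻¹ with hx
      have hterm : ∀ t ∈ Finset.range (p ^ (n + 1)),
          ζ n ^ (a * t) * (ζ n ^ (b * t))⁻¹ = x ^ t := by
        intro t _
        rw [hx, mul_pow, inv_pow, ← pow_mul, ← pow_mul]
      rw [Finset.sum_congr rfl hterm]
      have hx1 : x ≠ 1 := by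
        intro h
        rw [hx, mul_inv_eq_one₀ (pow_ne_zero _ (hzne n))] at h
        exact hab ((hζ n).pow_inj ha hb h)
      have hxm : x ^ (p ^ (n + 1)) = 1 := by
        rw [hx, mul_pow, inv_pow, ← pow_mul, ← pow_mul, mul_comm a, mul_comm b,
          pow_mul, pow_mul, (hζ n).pow_eq_one, one_pow, one_pow, inv_one, mul_one]
      rw [geom_sum_eq hx1, hxm, sub_self, zero_div]
  -- the coordinate functionals
  set φ : ∀ n : ℕ, ℕ → (MonoidAlgebra K (Multiplicative (ZMod (p ^ (n + 1)))) →ₗ[K] K) :=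
    fun n i => (Finsupp.lsum K fun (g : Multiplicative (ZMod (p ^ (n + 1)))) =>
      LinearMap.mulRight K (ζ n ^ (i * (Multiplicative.toAdd g).val))) ∘ₗ
        (MonoidAlgebra.coeffLinearEquiv K).toLinearMap with hφdef
  have hφsingle : ∀ n i (g : Multiplicative (ZMod (p ^ (n + 1)))) (c : K),
      φ n i (MonoidAlgebra.single g c) = c * ζ n ^ (i * (Multiplicative.toAdd g).val) :=
    fun n i g c => by
      simp only [hφdef, LinearMap.coe_comp, Function.comp_apply, LinearEquiv.coe_coe,
        MonoidAlgebra.coeffLinearEquiv_apply, MonoidAlgebra.coeff_single]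
      exact Finsupp.lsum_single _ _ _ _
  have hφe : ∀ n i k, i < p ^ (n + 1) → k < p ^ (n + 1) →
      φ n i (e n k) = if i = k then 1 else 0 := by
    intro n i k hi hk
    rw [he n k, map_smul, map_sum]
    have h1 : ∀ j ∈ Finset.range (p ^ (n + 1)),
        φ n i (MonoidAlgebra.single ((Multiplicative.ofAdd (1 : ZMod (p ^ (n + 1)))) ^ j)
          ((ζ n ^ (k * j))⁻¹)) = ζ n ^ (i * j) * (ζ n ^ (k * j))⁻¹ := by
      intro j _
      rw [hφsingle, hval, ← hmulmod, mul_comm]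
    rw [Finset.sum_congr rfl h1, hgeom n i k hi hk, smul_eq_mul]
    split_ifs with h
    · exact inv_mul_cancel₀ (hpKne n)
    · exact mul_zero _
  have hφsum : ∀ n (b : ℕ → K) (i : ℕ), i < p ^ (n + 1) →
      φ n i (∑ j ∈ Finset.range (p ^ (n + 1)), b j • e n j) = b i := by
    intro n b i hi
    rw [map_sum]
    have h1 : ∀ j ∈ Finset.range (p ^ (n + 1)),
        φ n i (b j • e n j) = if i = j then b j else 0 := by
      intro j hj
      rw [map_smul, smul_eq_mul, hφe n i j hi (Finset.mem_range.mp hj)]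
      split_ifs <;> simp
    rw [Finset.sum_congr rfl h1, Finset.sum_ite_eq, if_pos (Finset.mem_range.mpr hi)]
  -- representation of any element in terms of the idempotents
  have hrepr : ∀ n (x : MonoidAlgebra K (Multiplicative (ZMod (p ^ (n + 1))))),
      x = ∑ i ∈ Finset.range (p ^ (n + 1)), φ n i x • e n i := by
    intro n x
    haveI : NeZero (p ^ (n + 1)) := ⟨(hm0 n).ne'⟩
    induction x using MonoidAlgebra.induction_linear with
    | zero => simp
    | add f g hf hg =>
      have h1 : ∀ i ∈ Finset.range (p ^ (n + 1)),
          φ n i (f + g) • e n i = φ n i f • e n i + φ n i g • e n i := by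
        intro i _
        rw [map_add, add_smul]
      rw [Finset.sum_congr rfl h1, Finset.sum_add_distrib, ← hf, ← hg]
    | single h c =>
      have hv : (Multiplicative.toAdd h).val < p ^ (n + 1) := ZMod.val_lt _
      have h1 : ∀ i ∈ Finset.range (p ^ (n + 1)),
          φ n i (MonoidAlgebra.single h c) • e n i
            = ∑ j ∈ Finset.range (p ^ (n + 1)),
                MonoidAlgebra.single ((Multiplicative.ofAdd (1 : ZMod (p ^ (n + 1)))) ^ j)
                  (((p : K) ^ (n + 1))⁻¹ *
                    (c * (ζ n ^ ((Multiplicative.toAdd h).val * i) * (ζ n ^ (j * i))⁻¹))) := by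
        intro i _
        rw [hφsingle, he n i, smul_smul, Finset.smul_sum]
        refine Finset.sum_congr rfl fun j _ => ?_
        rw [MonoidAlgebra.smul_single']
        congr 1
        rw [mul_comm i ((Multiplicative.toAdd h).val), mul_comm i j]
        ring
      rw [Finset.sum_congr rfl h1, Finset.sum_comm]
      have h2 : ∀ j ∈ Finset.range (p ^ (n + 1)),
          (∑ i ∈ Finset.range (p ^ (n + 1)),
            MonoidAlgebra.single ((Multiplicative.ofAdd (1 : ZMod (p ^ (n + 1)))) ^ j)
              (((p : K) ^ (n + 1))⁻¹ *
                (c * (ζ n ^ ((Multiplicative.toAdd h).val * i) * (ζ n ^ (j * i))⁻¹))))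
            = MonoidAlgebra.single ((Multiplicative.ofAdd (1 : ZMod (p ^ (n + 1)))) ^ j)
                (((p : K) ^ (n + 1))⁻¹ * (c *
                  (if (Multiplicative.toAdd h).val = j then (p : K) ^ (n + 1) else 0))) := by
        intro j hj
        rw [show ∀ (g : Multiplicative (ZMod (p ^ (n + 1)))) (f : ℕ → K),
          ∑ i ∈ Finset.range (p ^ (n + 1)), MonoidAlgebra.single g (f i)
            = MonoidAlgebra.single g (∑ i ∈ Finset.range (p ^ (n + 1)), f i) from
          fun g f => (map_sum (MonoidAlgebra.singleAddHom g) f _).symm]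
        congr 1
        rw [← Finset.mul_sum, ← Finset.mul_sum,
          hgeom n (Multiplicative.toAdd h).val j hv (Finset.mem_range.mp hj)]
      rw [Finset.sum_congr rfl h2]
      have h3 : (∑ j ∈ Finset.range (p ^ (n + 1)),
          MonoidAlgebra.single ((Multiplicative.ofAdd (1 : ZMod (p ^ (n + 1)))) ^ j)
            (((p : K) ^ (n + 1))⁻¹ * (c *
              (if (Multiplicative.toAdd h).val = j then (p : K) ^ (n + 1) else 0))))
          = MonoidAlgebra.single
              ((Multiplicative.ofAdd (1 : ZMod (p ^ (n + 1)))) ^ (Multiplicative.toAdd h).val)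
              (((p : K) ^ (n + 1))⁻¹ * (c * (p : K) ^ (n + 1))) := by
        rw [Finset.sum_eq_single_of_mem _ (Finset.mem_range.mpr hv)]
        · rw [if_pos rfl]
        · intro j hj hne
          rw [if_neg (fun hh => hne hh.symm), mul_zero, mul_zero]
          exact MonoidAlgebra.single_zero _
      rw [h3, ← hgsurj n h]
      congr 1
      rw [mul_comm c, ← mul_assoc, inv_mul_cancel₀ (hpKne n), one_mul]
  -- existence of the exponent of an automorphism
  have hcex : ∀ (τ : K ≃ₐ[ℚ] K) (n : ℕ), ∃ c : ℕ, c < p ^ (n + 1) ∧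
      c.Coprime (p ^ (n + 1)) ∧ τ (ζ n) = ζ n ^ c := by
    intro τ n
    haveI : NeZero (p ^ (n + 1)) := ⟨(hm0 n).ne'⟩
    have h1 : IsPrimitiveRoot (τ (ζ n)) (p ^ (n + 1)) :=
      (hζ n).map_of_injective τ.injective
    obtain ⟨c, hlt, hcop, hc⟩ := ((hζ n).isPrimitiveRoot_iff).mp h1
    exact ⟨c, hlt, hcop, hc.symm⟩
  -- T is semilinear
  have hsemi : ∀ (τ : K ≃ₐ[ℚ] K) (n : ℕ) (a : K) x, T τ n (a • x) = τ a • T τ n x := by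
    intro τ n a x
    obtain ⟨c, -, -, hc⟩ := hcex τ n
    induction x using MonoidAlgebra.induction_linear with
    | zero => rw [smul_zero, map_zero, smul_zero]
    | add f g hf hg => rw [smul_add, map_add, map_add, hf, hg, smul_add]
    | single g b =>
      rw [MonoidAlgebra.smul_single', hT τ n c hc, hT τ n c hc, map_mul,
        MonoidAlgebra.smul_single']
  -- T fixes the idempotents
  have hTe : ∀ (τ : K ≃ₐ[ℚ] K) (n k : ℕ), k < p ^ (n + 1) → T τ n (e n k) = e n k := by
    intro τ n k hk
    obtain ⟨c, hclt, hcop, hc⟩ := hcex τ n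
    obtain ⟨c', -, hcc'⟩ := Nat.exists_mul_mod_eq_one_of_coprime hcop (hm1 n)
    have hqe : ((p : K) ^ (n + 1))⁻¹ = algebraMap ℚ K (((p : ℚ) ^ (n + 1))⁻¹) := by
      rw [map_inv₀, map_pow, map_natCast]
    rw [he n k, hqe, algebraMap_smul, map_smul, map_sum]
    congr 1
    have hterm : ∀ j ∈ Finset.range (p ^ (n + 1)),
        T τ n (MonoidAlgebra.single ((Multiplicative.ofAdd (1 : ZMod (p ^ (n + 1)))) ^ j)
          ((ζ n ^ (k * j))⁻¹))
          = MonoidAlgebra.single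
              ((Multiplicative.ofAdd (1 : ZMod (p ^ (n + 1)))) ^ (c * j % p ^ (n + 1)))
              ((ζ n ^ (k * (c * j % p ^ (n + 1))))⁻¹) := by
      intro j hj
      rw [hT τ n c hc]
      congr 1
      · rw [← pow_mul, mul_comm j c, hgp n (c * j)]
      · rw [map_inv₀, map_pow, hc, ← pow_mul, mul_left_comm c k j, hmulmod n k (c * j)]
    refine (Finset.sum_congr rfl hterm).trans ?_
    refine Finset.sum_nbij' (fun j => c * j % p ^ (n + 1)) (fun j => c' * j % p ^ (n + 1))
      ?_ ?_ ?_ ?_ ?_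
    · intro j hj
      exact Finset.mem_range.mpr (Nat.mod_lt _ (hm0 n))
    · intro j hj
      exact Finset.mem_range.mpr (Nat.mod_lt _ (hm0 n))
    · intro j hj
      calc c' * (c * j % p ^ (n + 1)) % p ^ (n + 1)
          = (c' % p ^ (n + 1)) * ((c * j % p ^ (n + 1)) % p ^ (n + 1)) % p ^ (n + 1) :=
            Nat.mul_mod _ _ _
        _ = (c' % p ^ (n + 1)) * ((c * j) % p ^ (n + 1)) % p ^ (n + 1) := by
            rw [Nat.mod_mod_of_dvd _ dvd_rfl]
        _ = (c' * (c * j)) % p ^ (n + 1) := (Nat.mul_mod _ _ _).symm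
        _ = ((c * c') * j) % p ^ (n + 1) := by ring_nf
        _ = ((c * c') % p ^ (n + 1)) * (j % p ^ (n + 1)) % p ^ (n + 1) := Nat.mul_mod _ _ _
        _ = (j % p ^ (n + 1)) % p ^ (n + 1) := by rw [hcc', one_mul]
        _ = j := by
            rw [Nat.mod_mod_of_dvd _ dvd_rfl, Nat.mod_eq_of_lt (Finset.mem_range.mp hj)]
    · intro j hj
      calc c * (c' * j % p ^ (n + 1)) % p ^ (n + 1)
          = (c % p ^ (n + 1)) * ((c' * j % p ^ (n + 1)) % p ^ (n + 1)) % p ^ (n + 1) :=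
            Nat.mul_mod _ _ _
        _ = (c % p ^ (n + 1)) * ((c' * j) % p ^ (n + 1)) % p ^ (n + 1) := by
            rw [Nat.mod_mod_of_dvd _ dvd_rfl]
        _ = (c * (c' * j)) % p ^ (n + 1) := (Nat.mul_mod _ _ _).symm
        _ = ((c * c') * j) % p ^ (n + 1) := by ring_nf
        _ = ((c * c') % p ^ (n + 1)) * (j % p ^ (n + 1)) % p ^ (n + 1) := Nat.mul_mod _ _ _
        _ = (j % p ^ (n + 1)) % p ^ (n + 1) := by rw [hcc', one_mul]
        _ = j := by
            rw [Nat.mod_mod_of_dvd _ dvd_rfl, Nat.mod_eq_of_lt (Finset.mem_range.mp hj)]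
    · intro j hj
      rfl
  constructor
  · intro hfix n
    have hcoef : ∀ i, i < p ^ (n + 1) → ∀ τ : K ≃ₐ[ℚ] K, τ (φ n i (γ n)) = φ n i (γ n) := by
      intro i hi τ
      have h1 := hfix τ n
      conv_lhs at h1 => rw [hrepr n (γ n)]
      rw [map_sum] at h1
      have h2 : ∀ j ∈ Finset.range (p ^ (n + 1)),
          T τ n (φ n j (γ n) • e n j) = τ (φ n j (γ n)) • e n j := by
        intro j hj
        rw [hsemi τ n _ _, hTe τ n j (Finset.mem_range.mp hj)]
      rw [Finset.sum_congr rfl h2] at h1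
      have h4 := hφsum n (fun j => τ (φ n j (γ n))) i hi
      rw [h1] at h4
      exact h4.symm
    have hex : ∀ i ∈ Finset.range (p ^ (n + 1)), ∃ q : ℚ, algebraMap ℚ K q = φ n i (γ n) :=
      fun i hi => aux_fixed_rat p hp K ζ hζ hcompat hK _ (hcoef i (Finset.mem_range.mp hi))
    choose q hq using hex
    rw [hrepr n (γ n)]
    apply Submodule.sum_mem
    intro i hi
    rw [← hq i hi, algebraMap_smul]
    exact Submodule.smul_mem _ _ (Submodule.subset_span ⟨⟨i, Finset.mem_range.mp hi⟩, rfl⟩)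
  · intro hspan τ n
    refine Submodule.span_induction ?_ ?_ ?_ ?_ (hspan n)
    · rintro x ⟨i, rfl⟩
      exact hTe τ n i i.isLt
    · exact map_zero _
    · intro x y hx' hy' ihx ihy
      rw [map_add, ihx, ihy]
    · intro r x hx' ih
      have h5 : T τ n (r • x) = r • T τ n x := (T τ n).toLinearMap.map_smul r x
      rw [h5, ih]
end

section
/- The subgroup Gal(L/ℚ(ζ_1)) of Gal(L/ℚ), consisting of the automorphisms of L fixing ζ_1 := ζ^{p^{n−1}}, is a Sylow p-subgroup of Gal(L/ℚ); it has order p^{2n−1} and index p−1. -/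
open Polynomial IntermediateField

set_option maxHeartbeats 1000000 in
set_option synthInstance.maxHeartbeats 100000 in
lemma aux_not_pow (p n : ℕ) (hp : p.Prime) (hp2 : p ≠ 2) (hn : 1 ≤ n)
    (a : ℚ) (ha : 0 < a) (hpow : ∀ b : ℚ, b ^ p ≠ a)
    (w : ℝ) (hw : 0 < w) (hwa : w ^ (p ^ n) = (a : ℝ))
    (ζ : ℂ) (hζ : IsPrimitiveRoot ζ (p ^ n)) :
    ∀ b : (IntermediateField.adjoin ℚ {ζ} : IntermediateField ℚ ℂ),
      b ^ p ≠ algebraMap ℚ _ a := by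
  set Qζ := (IntermediateField.adjoin ℚ {ζ} : IntermediateField ℚ ℂ) with hQζ
  have hppos : 0 < p := hp.pos
  have hpnpos : 0 < p ^ n := pow_pos hppos n
  set N : ℕ+ := ⟨p ^ n, hpnpos⟩ with hN
  have hζN : IsPrimitiveRoot ζ (N : ℕ) := hζ
  have hζint : IsIntegral ℚ ζ := (hζN.isIntegral hpnpos).tower_top
  have htoSub : Qζ.toSubalgebra = Algebra.adjoin ℚ {ζ} :=
    IntermediateField.adjoin_simple_toSubalgebra_of_isAlgebraic hζint.isAlgebraic
  haveI : IsCyclotomicExtension {(N : ℕ)} ℚ Qζ := by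
    have h1 : IsCyclotomicExtension {(N : ℕ)} ℚ (Algebra.adjoin ℚ {ζ}) :=
      hζN.adjoin_isCyclotomicExtension ℚ
    exact IsCyclotomicExtension.equiv {(N : ℕ)} ℚ _ (Subalgebra.equivOfEq _ _ htoSub.symm)
  haveI : FiniteDimensional ℚ Qζ := IsCyclotomicExtension.finiteDimensional {(N : ℕ)} ℚ Qζ
  haveI : IsGalois ℚ Qζ := IsCyclotomicExtension.isGalois {(N : ℕ)} ℚ Qζ
  -- ζ as an element of Qζ
  have hζmem : ζ ∈ Qζ := IntermediateField.subset_adjoin ℚ {ζ} rfl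
  have hμQ : IsPrimitiveRoot (⟨ζ, hζmem⟩ : Qζ) (N : ℕ) :=
    hζN.of_map_of_injective (f := algebraMap Qζ ℂ) (algebraMap Qζ ℂ).injective
  -- commutativity of the Galois group
  have hcomm : ∀ σ τ : Qζ ≃ₐ[ℚ] Qζ, σ * τ = τ * σ := by
    intro σ τ
    refine hμQ.autToPow_injective ℚ ?_
    rw [map_mul, map_mul, mul_comm]
  intro b hb
  -- the real positive p-th root of a, and the primitive p-th root of unity μ
  set w1 : ℂ := (w : ℂ) ^ (p ^ (n - 1)) with hw1
  have hw1p : w1 ^ p = (a : ℂ) := by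
    rw [hw1, ← pow_mul, ← pow_succ, Nat.sub_add_cancel hn]
    exact_mod_cast congrArg (fun x : ℝ => (x : ℂ)) hwa
  set μ : ℂ := ζ ^ (p ^ (n - 1)) with hμ
  have hdvd : p ^ (n - 1) ∣ p ^ n := pow_dvd_pow p (Nat.sub_le n 1)
  have hμp : IsPrimitiveRoot μ p := by
    have := hζ.pow_of_dvd (pow_ne_zero _ hp.ne_zero) hdvd
    rwa [show p ^ n / p ^ (n - 1) = p by
      rw [Nat.pow_div (Nat.sub_le n 1) hppos, Nat.sub_sub_self hn, pow_one]] at this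
  have hμmem : μ ∈ Qζ := pow_mem hζmem _
  have hw1ne : w1 ≠ 0 := by
    apply pow_ne_zero
    exact_mod_cast ne_of_gt hw
  -- b = w1 * (p-th root of unity), hence w1 ∈ Qζ
  have hbp : (b : ℂ) ^ p = (a : ℂ) := by
    have := congrArg (algebraMap Qζ ℂ) hb
    push_cast at this ⊢
    simpa using this
  have hquot : ((b : ℂ) / w1) ^ p = 1 := by
    rw [div_pow, hbp, hw1p, div_self]
    rw [← hw1p]; exact pow_ne_zero _ hw1ne
  haveI : NeZero p := ⟨hp.ne_zero⟩
  obtain ⟨i, hi, hiμ⟩ := hμp.eq_pow_of_pow_eq_one hquot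
  have hbne : (b : ℂ) ≠ 0 := by
    intro h0
    rw [h0, zero_pow hp.ne_zero] at hbp
    have : (a : ℚ) = 0 := by exact_mod_cast hbp.symm
    exact (ne_of_gt ha) this
  have hw1mem : w1 ∈ Qζ := by
    have : w1 = (b : ℂ) * (μ ^ i)⁻¹ := by
      field_simp [hiμ]
      rw [hiμ, div_div_cancel₀ hbne]
    rw [this]
    exact mul_mem b.2 (inv_mem (pow_mem hμmem i))
  set x : Qζ := ⟨w1, hw1mem⟩ with hx
  set m : Qζ := ⟨μ, hμmem⟩ with hm
  set y : Qζ := x * m with hy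
  have hxp : x ^ p = algebraMap ℚ Qζ a := by
    apply Subtype.ext
    push_cast
    exact hw1p
  have hmp : m ^ p = 1 := by
    apply Subtype.ext
    push_cast
    exact hμp.pow_eq_one
  have hyp : y ^ p = algebraMap ℚ Qζ a := by
    rw [hy, mul_pow, hxp, hmp, mul_one]
  -- minimal polynomials
  have hirr : Irreducible (X ^ p - C a) := X_pow_sub_C_irreducible_of_prime hp hpow
  have hmono : (X ^ p - C a).Monic := monic_X_pow_sub_C a hp.ne_zero
  have hminx : minpoly ℚ x = X ^ p - C a := by
    symm
    apply minpoly.eq_of_irreducible_of_monic hirr _ hmono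
    rw [map_sub, map_pow, aeval_X, aeval_C, hxp, sub_self]
  have hminy : minpoly ℚ y = X ^ p - C a := by
    symm
    apply minpoly.eq_of_irreducible_of_monic hirr _ hmono
    rw [map_sub, map_pow, aeval_X, aeval_C, hyp, sub_self]
  -- an automorphism sending x to y
  obtain ⟨σ, hσ⟩ := (Normal.minpoly_eq_iff_mem_orbit Qζ).mp (hminy.trans hminx.symm)
  -- complex conjugation restricted to Qζ
  have hnormal : Normal ℚ Qζ := inferInstance
  set conjC : ℂ ≃ₐ[ℚ] ℂ := Complex.conjAe.restrictScalars ℚ with hconjC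
  set c : Qζ ≃ₐ[ℚ] Qζ := conjC.restrictNormal Qζ with hc
  have hcspec : ∀ z : Qζ, (algebraMap Qζ ℂ) (c z) = conjC (algebraMap Qζ ℂ z) :=
    fun z => AlgEquiv.restrictNormal_commutes conjC Qζ z
  have hxcoe : (algebraMap Qζ ℂ) x = w1 := rfl
  have hycoe : (algebraMap Qζ ℂ) y = w1 * μ := rfl
  have hconjap : ∀ z : ℂ, conjC z = (starRingEnd ℂ) z := fun z => rfl
  have hcx : c x = x := by
    apply_fun (algebraMap Qζ ℂ) using (algebraMap Qζ ℂ).injective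
    rw [hcspec x, hxcoe, hconjap, hw1, ← Complex.ofReal_pow, Complex.conj_ofReal]
  have hμconj : (starRingEnd ℂ) μ = μ⁻¹ := by
    have habs : ‖μ‖ = 1 := Complex.norm_eq_one_of_pow_eq_one hμp.pow_eq_one hp.ne_zero
    rw [← Complex.inv_eq_conj habs]
  have hμne : μ ≠ 0 := hμp.ne_zero hp.ne_zero
  have hxne : x ≠ 0 := fun h => hw1ne (by rw [← hxcoe, h, map_zero])
  have hcy : c y = x * m⁻¹ := by
    apply_fun (algebraMap Qζ ℂ) using (algebraMap Qζ ℂ).injective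
    have h2 : (algebraMap Qζ ℂ) (x * m⁻¹) = w1 * μ⁻¹ := by
      rw [map_mul, map_inv₀, hxcoe]; rfl
    rw [hcspec y, hycoe, hconjap, map_mul, hμconj, h2, hw1, ← Complex.ofReal_pow,
      Complex.conj_ofReal]
  have hσ' : σ x = y := hσ
  have hkey := congrArg (fun τ : Qζ ≃ₐ[ℚ] Qζ => τ x) (hcomm σ c)
  simp only [AlgEquiv.mul_apply] at hkey
  rw [hcx, hσ', hcy] at hkey
  have hm2 : m ^ 2 = 1 := by
    have hxy : x * m = x * m⁻¹ := by rw [← hy, hkey]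
    have hmm : m = m⁻¹ := mul_left_cancel₀ hxne hxy
    rw [pow_two]
    nth_rewrite 2 [hmm]
    exact mul_inv_cancel₀ (fun h => hμne (by apply_fun (algebraMap Qζ ℂ) at h; exact h))
  have hord1 : orderOf m ∣ 2 := orderOf_dvd_of_pow_eq_one hm2
  have hord2 : orderOf m ∣ p := orderOf_dvd_of_pow_eq_one hmp
  have hcop : Nat.Coprime 2 p := (Nat.coprime_primes Nat.prime_two hp).mpr (Ne.symm hp2)
  have hm1 : m = 1 := orderOf_eq_one_iff.mp (Nat.dvd_one.mp (hcop ▸ Nat.dvd_gcd hord1 hord2))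
  have hμ1 : μ = 1 := by exact congrArg (algebraMap Qζ ℂ) hm1
  exact hμp.ne_one hp.one_lt hμ1

set_option maxHeartbeats 1000000 in
set_option synthInstance.maxHeartbeats 100000 in
lemma aux_finrank (p n : ℕ) (hp : p.Prime) (hp2 : p ≠ 2) (hn : 1 ≤ n)
    (a : ℚ) (ha : 0 < a) (hpow : ∀ b : ℚ, b ^ p ≠ a)
    (w : ℝ) (hw : 0 < w) (hwa : w ^ (p ^ n) = (a : ℝ))
    (ζ : ℂ) (hζ : IsPrimitiveRoot ζ (p ^ n)) :
    Module.finrank ℚ (IntermediateField.adjoin ℚ {ζ, (w : ℂ)} : IntermediateField ℚ ℂ) =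
      p ^ (2 * n - 1) * (p - 1) := by
  have hppos : 0 < p := hp.pos
  have hpnpos : 0 < p ^ n := pow_pos hppos n
  set Qζ := (IntermediateField.adjoin ℚ {ζ} : IntermediateField ℚ ℂ) with hQζ
  set T := (IntermediateField.adjoin Qζ {(w : ℂ)} : IntermediateField Qζ ℂ) with hT
  have hadj : T.restrictScalars ℚ = IntermediateField.adjoin ℚ {ζ, (w : ℂ)} := by
    erw [hT, hQζ, IntermediateField.adjoin_adjoin_left]
    congr 1
  -- instances on Qζ
  set N : ℕ+ := ⟨p ^ n, hpnpos⟩ with hN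
  have hζN : IsPrimitiveRoot ζ (N : ℕ) := hζ
  have hζint : IsIntegral ℚ ζ := (hζN.isIntegral hpnpos).tower_top
  have htoSub : Qζ.toSubalgebra = Algebra.adjoin ℚ {ζ} :=
    IntermediateField.adjoin_simple_toSubalgebra_of_isAlgebraic hζint.isAlgebraic
  haveI : IsCyclotomicExtension {(N : ℕ)} ℚ Qζ := by
    have h1 : IsCyclotomicExtension {(N : ℕ)} ℚ (Algebra.adjoin ℚ {ζ}) :=
      hζN.adjoin_isCyclotomicExtension ℚ
    exact IsCyclotomicExtension.equiv {(N : ℕ)} ℚ _ (Subalgebra.equivOfEq _ _ htoSub.symm)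
  haveI : FiniteDimensional ℚ Qζ := IsCyclotomicExtension.finiteDimensional {(N : ℕ)} ℚ Qζ
  have hrkQζ : Module.finrank ℚ Qζ = (p ^ n).totient :=
    IsCyclotomicExtension.finrank (n := (N : ℕ)) Qζ (Polynomial.cyclotomic.irreducible_rat hpnpos)
  -- degree of w over Qζ
  have hirr : Irreducible (X ^ (p ^ n) - C (algebraMap ℚ Qζ a)) :=
    X_pow_sub_C_irreducible_of_prime_pow hp hp2 n
      (fun b hb => aux_not_pow p n hp hp2 hn a ha hpow w hw hwa ζ hζ b hb)
  have hwroot : (aeval (w : ℂ)) (X ^ (p ^ n) - C (algebraMap ℚ Qζ a)) = 0 := by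
    rw [map_sub, map_pow, aeval_X, aeval_C, ← IsScalarTower.algebraMap_apply]
    have : ((w : ℂ)) ^ (p ^ n) = (a : ℂ) := by
      rw [← Complex.ofReal_pow, hwa]
      norm_num
    rw [this]
    simp
  have hwint : IsIntegral Qζ ((w : ℂ)) :=
    ⟨X ^ (p ^ n) - C (algebraMap ℚ Qζ a), monic_X_pow_sub_C _ (pow_ne_zero n hp.ne_zero), hwroot⟩
  have hminw : minpoly Qζ ((w : ℂ)) = X ^ (p ^ n) - C (algebraMap ℚ Qζ a) :=
    (minpoly.eq_of_irreducible_of_monic hirr hwroot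
      (monic_X_pow_sub_C _ (pow_ne_zero n hp.ne_zero))).symm
  have hrkT : Module.finrank Qζ T = p ^ n := by
    rw [hT, IntermediateField.adjoin.finrank hwint, hminw, natDegree_X_pow_sub_C]
  haveI : FiniteDimensional Qζ T := by
    rw [hT]
    exact IntermediateField.finiteDimensional_adjoin
      (fun x hx => by rw [Set.mem_singleton_iff] at hx; rwa [hx])
  have htower : Module.finrank ℚ Qζ * Module.finrank Qζ T = Module.finrank ℚ T :=
    Module.finrank_mul_finrank ℚ Qζ T
  have hres : Module.finrank ℚ (T.restrictScalars ℚ) = Module.finrank ℚ T := rfl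
  rw [← hadj, hres, ← htower, hrkQζ, hrkT, Nat.totient_prime_pow hp (by omega)]
  rw [mul_comm (p ^ (n - 1)) (p - 1), mul_assoc, ← pow_add, mul_comm (p - 1)]
  congr 2
  omega

set_option maxHeartbeats 1000000 in
set_option synthInstance.maxHeartbeats 100000 in
lemma aux_splitting (p n : ℕ) (hp : p.Prime) (hn : 1 ≤ n)
    (a : ℚ) (ha : 0 < a)
    (w : ℝ) (hw : 0 < w) (hwa : w ^ (p ^ n) = (a : ℝ))
    (ζ : ℂ) (hζ : IsPrimitiveRoot ζ (p ^ n)) :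
    (X ^ (p ^ n) - C a).IsSplittingField ℚ
      (IntermediateField.adjoin ℚ {ζ, (w : ℂ)} : IntermediateField ℚ ℂ) := by
  have hppos : 0 < p := hp.pos
  have hpnpos : 0 < p ^ n := pow_pos hppos n
  haveI : NeZero (p ^ n) := ⟨hpnpos.ne'⟩
  set f : ℚ[X] := X ^ (p ^ n) - C a with hf
  have hwne : ((w : ℂ)) ≠ 0 := by exact_mod_cast hw.ne'
  have hwpow : ((w : ℂ)) ^ (p ^ n) = (a : ℂ) := by
    rw [← Complex.ofReal_pow, hwa]; norm_num
  have hsplits : (f.map (algebraMap ℚ ℂ)).Splits := IsAlgClosed.splits _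
  have hfne : f ≠ 0 := X_pow_sub_C_ne_zero hpnpos a
  have hroot : ∀ x : ℂ, x ∈ f.rootSet ℂ ↔ x ^ (p ^ n) = (a : ℂ) := by
    intro x
    rw [mem_rootSet]
    simp only [hf, map_sub, map_pow, aeval_X, aeval_C, sub_eq_zero]
    exact ⟨fun h => by rw [h.2]; rfl, fun h => ⟨hfne, by rw [h]; rfl⟩⟩
  have heq : IntermediateField.adjoin ℚ (f.rootSet ℂ) =
      IntermediateField.adjoin ℚ {ζ, (w : ℂ)} := by
    apply le_antisymm
    · rw [IntermediateField.adjoin_le_iff]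
      intro x hx
      rw [hroot] at hx
      have hq : (x / (w : ℂ)) ^ (p ^ n) = 1 := by
        rw [div_pow, hx, hwpow, div_self]
        rw [← hwpow]; exact pow_ne_zero _ hwne
      obtain ⟨i, _, hi⟩ := hζ.eq_pow_of_pow_eq_one hq
      have hxw : x = (w : ℂ) * ζ ^ i := by
        rw [hi, mul_comm, div_mul_cancel₀ x hwne]
      rw [hxw]
      exact mul_mem
        (IntermediateField.subset_adjoin ℚ {ζ, (w : ℂ)} (Set.mem_insert_of_mem ζ rfl))
        (pow_mem (IntermediateField.subset_adjoin ℚ {ζ, (w : ℂ)} (Set.mem_insert ζ _)) i)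
    · rw [IntermediateField.adjoin_le_iff]
      intro x hx
      have hwmem : ((w : ℂ)) ∈ IntermediateField.adjoin ℚ (f.rootSet ℂ) :=
        IntermediateField.subset_adjoin ℚ _ ((hroot _).mpr hwpow)
      have hζmem : ζ ∈ IntermediateField.adjoin ℚ (f.rootSet ℂ) := by
        have h1 : ((w : ℂ) * ζ) ∈ f.rootSet ℂ :=
          (hroot _).mpr (by rw [mul_pow, hwpow, hζ.pow_eq_one, mul_one])
        have h2 : ζ = ((w : ℂ) * ζ) * ((w : ℂ))⁻¹ := by
          rw [mul_comm ((w : ℂ)) ζ, mul_assoc, mul_inv_cancel₀ hwne, mul_one]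
        rw [h2]
        exact mul_mem (IntermediateField.subset_adjoin ℚ _ h1) (inv_mem hwmem)
      rcases hx with h | h
      · rw [h]; exact hζmem
      · rw [Set.mem_singleton_iff] at h; rw [h]; exact hwmem
  rw [← heq]
  exact IntermediateField.adjoin_rootSet_isSplittingField hsplits

set_option maxHeartbeats 1000000 in
set_option synthInstance.maxHeartbeats 100000 in
/-- The subgroup `Gal(L/ℚ(ζ_1))` of `Gal(L/ℚ)` consisting of the automorphisms
fixing `ζ_1 = ζ^{p^{n−1}}` is a Sylow `p`-subgroup of `Gal(L/ℚ)`; it has order `p^{2n−1}` and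
index `p−1`.  Here `L = ℚ(ζ, w)` is the splitting field of `X^{p^n} − a` over ℚ. -/
theorem stmt_18 (p n : ℕ) (hp : p.Prime) (hp2 : p ≠ 2) (hn : 1 ≤ n)
    (a : ℚ) (ha : 0 < a) (hpow : ∀ b : ℚ, b ^ p ≠ a)
    (w : ℝ) (hw : 0 < w) (hwa : w ^ (p ^ n) = (a : ℝ))
    (ζ : ℂ) (hζ : IsPrimitiveRoot ζ (p ^ n))
    (ζ1L : ↥(IntermediateField.adjoin ℚ {ζ, (w : ℂ)}))
    (hζ1L : (ζ1L : ℂ) = ζ ^ (p ^ (n - 1))) :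
    (∃ S : Sylow p (↥(IntermediateField.adjoin ℚ {ζ, (w : ℂ)}) ≃ₐ[ℚ]
        ↥(IntermediateField.adjoin ℚ {ζ, (w : ℂ)})),
      (S : Subgroup _) =
        (IntermediateField.adjoin ℚ {ζ1L} :
          IntermediateField ℚ ↥(IntermediateField.adjoin ℚ {ζ, (w : ℂ)})).fixingSubgroup) ∧
    Nat.card ↥((IntermediateField.adjoin ℚ {ζ1L} :
        IntermediateField ℚ ↥(IntermediateField.adjoin ℚ {ζ, (w : ℂ)})).fixingSubgroup) =
      p ^ (2 * n - 1) ∧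
    ((IntermediateField.adjoin ℚ {ζ1L} :
        IntermediateField ℚ ↥(IntermediateField.adjoin ℚ {ζ, (w : ℂ)})).fixingSubgroup).index =
      p - 1 := by
  have hppos : 0 < p := hp.pos
  have hp3 : 3 ≤ p := by
    rcases hp.two_le.lt_or_eq with h | h
    · omega
    · omega
  have hpnpos : 0 < p ^ n := pow_pos hppos n
  have hsf : (X ^ (p ^ n) - C a).IsSplittingField ℚ
      (IntermediateField.adjoin ℚ {ζ, (w : ℂ)} : IntermediateField ℚ ℂ) :=
    aux_splitting p n hp hn a ha w hw hwa ζ hζ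
  haveI := hsf
  haveI : FiniteDimensional ℚ (IntermediateField.adjoin ℚ {ζ, (w : ℂ)} : IntermediateField ℚ ℂ) :=
    IsSplittingField.finiteDimensional _ (X ^ (p ^ n) - C a)
  haveI : Normal ℚ (IntermediateField.adjoin ℚ {ζ, (w : ℂ)} : IntermediateField ℚ ℂ) :=
    Normal.of_isSplittingField (X ^ (p ^ n) - C a)
  haveI : IsGalois ℚ (IntermediateField.adjoin ℚ {ζ, (w : ℂ)} : IntermediateField ℚ ℂ) := ⟨⟩
  have hrank : Module.finrank ℚ
      (IntermediateField.adjoin ℚ {ζ, (w : ℂ)} : IntermediateField ℚ ℂ) =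
      p ^ (2 * n - 1) * (p - 1) :=
    aux_finrank p n hp hp2 hn a ha hpow w hw hwa ζ hζ
  -- ζ1L is a primitive p-th root of unity
  have hdvd : p ^ (n - 1) ∣ p ^ n := pow_dvd_pow p (Nat.sub_le n 1)
  have hμp : IsPrimitiveRoot (ζ ^ (p ^ (n - 1))) p := by
    have := hζ.pow_of_dvd (pow_ne_zero _ hp.ne_zero) hdvd
    rwa [show p ^ n / p ^ (n - 1) = p by
      rw [Nat.pow_div (Nat.sub_le n 1) hppos, Nat.sub_sub_self hn, pow_one]] at this
  have hζ1 : IsPrimitiveRoot ζ1L p := by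
    have h2 : algebraMap (IntermediateField.adjoin ℚ {ζ, (w : ℂ)} : IntermediateField ℚ ℂ) ℂ ζ1L
        = ζ ^ (p ^ (n - 1)) := hζ1L
    rw [← h2] at hμp
    exact hμp.of_map_of_injective (algebraMap (↥(IntermediateField.adjoin ℚ {ζ, (w : ℂ)})) ℂ).injective
  have hζ1int : IsIntegral ℚ ζ1L := (hζ1.isIntegral hppos).tower_top
  have hminζ1 : minpoly ℚ ζ1L = cyclotomic p ℚ := (cyclotomic_eq_minpoly_rat hζ1 hppos).symm
  have hrkK1 : Module.finrank ℚ
      ↥(IntermediateField.adjoin ℚ {ζ1L} :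
        IntermediateField ℚ ↥(IntermediateField.adjoin ℚ {ζ, (w : ℂ)})) = p - 1 := by
    rw [IntermediateField.adjoin.finrank hζ1int, hminζ1, natDegree_cyclotomic,
      Nat.totient_prime hp]
  have hcardH : Nat.card ↥((IntermediateField.adjoin ℚ {ζ1L} :
        IntermediateField ℚ ↥(IntermediateField.adjoin ℚ {ζ, (w : ℂ)})).fixingSubgroup) =
      Module.finrank
        ↥(IntermediateField.adjoin ℚ {ζ1L} :
          IntermediateField ℚ ↥(IntermediateField.adjoin ℚ {ζ, (w : ℂ)}))
        ↥(IntermediateField.adjoin ℚ {ζ, (w : ℂ)} : IntermediateField ℚ ℂ) := by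
    rw [Nat.card_congr (IntermediateField.fixingSubgroupEquiv _).toEquiv,
      IsGalois.card_aut_eq_finrank]
  have htower := Module.finrank_mul_finrank ℚ
    ↥(IntermediateField.adjoin ℚ {ζ1L} :
      IntermediateField ℚ ↥(IntermediateField.adjoin ℚ {ζ, (w : ℂ)}))
    ↥(IntermediateField.adjoin ℚ {ζ, (w : ℂ)} : IntermediateField ℚ ℂ)
  have hrkL1 : Module.finrank
      ↥(IntermediateField.adjoin ℚ {ζ1L} :
        IntermediateField ℚ ↥(IntermediateField.adjoin ℚ {ζ, (w : ℂ)}))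
      ↥(IntermediateField.adjoin ℚ {ζ, (w : ℂ)} : IntermediateField ℚ ℂ) =
      p ^ (2 * n - 1) := by
    rw [hrkK1, hrank] at htower
    refine Nat.eq_of_mul_eq_mul_left (show 0 < p - 1 by omega) ?_
    rw [htower, mul_comm]
  have hcardG : Nat.card (↥(IntermediateField.adjoin ℚ {ζ, (w : ℂ)}) ≃ₐ[ℚ]
      ↥(IntermediateField.adjoin ℚ {ζ, (w : ℂ)})) = p ^ (2 * n - 1) * (p - 1) := by
    rw [IsGalois.card_aut_eq_finrank, hrank]
  have hcardH' : Nat.card ↥((IntermediateField.adjoin ℚ {ζ1L} :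
      IntermediateField ℚ ↥(IntermediateField.adjoin ℚ {ζ, (w : ℂ)})).fixingSubgroup) =
      p ^ (2 * n - 1) := hcardH.trans hrkL1
  have hindex : ((IntermediateField.adjoin ℚ {ζ1L} :
      IntermediateField ℚ ↥(IntermediateField.adjoin ℚ {ζ, (w : ℂ)})).fixingSubgroup).index =
      p - 1 := by
    have h := Subgroup.card_mul_index (IntermediateField.adjoin ℚ {ζ1L} :
      IntermediateField ℚ ↥(IntermediateField.adjoin ℚ {ζ, (w : ℂ)})).fixingSubgroup
    rw [hcardH', hcardG] at h
    exact Nat.eq_of_mul_eq_mul_left (pow_pos hppos _) h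
  haveI : Fact p.Prime := ⟨hp⟩
  have hnd : ¬ p ∣ (p - 1) := by
    intro h
    have := Nat.le_of_dvd (by omega) h
    omega
  have hfact : (Nat.card (↥(IntermediateField.adjoin ℚ {ζ, (w : ℂ)}) ≃ₐ[ℚ]
      ↥(IntermediateField.adjoin ℚ {ζ, (w : ℂ)}))).factorization p = 2 * n - 1 := by
    rw [hcardG, Nat.factorization_mul (pow_ne_zero _ hp.ne_zero) (by omega : p - 1 ≠ 0),
      Finsupp.add_apply, hp.factorization_pow, Finsupp.single_eq_same,
      Nat.factorization_eq_zero_of_not_dvd hnd, add_zero]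
  exact ⟨⟨Sylow.ofCard _ (by rw [hfact]; exact hcardH'), rfl⟩, hcardH', hindex⟩
end
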